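/- A vector g ∈ ℝ^{k×n} is a circuit of the bounded-size partition polytope PP(κ±) if and only if g describes a single cyclical exchange or a single sequential movement of items among the clusters. -/

import Mathlib

/-!
STATEMENT 16: A vector g ∈ ℝ^{k×n} is a circuit of the bounded-size partition polytope PP(κ±)
iff g describes a single cyclical exchange or a single sequential movement of items among the
clusters.
-/

/-- The bounded-size partition polytope `PP(κ±) ⊆ ℝ^{k×n}`. -/
def PPpm {k n : ℕ} (κm κp : Fin k → ℕ) : Set (Fin k × Fin n → ℝ) :=
  {y | (∀ j, ∑ i, y (i, j) = 1) ∧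
       (∀ i, (κm i : ℝ) ≤ ∑ j, y (i, j)) ∧
       (∀ i, ∑ j, y (i, j) ≤ (κp i : ℝ)) ∧
       ∀ p, 0 ≤ y p}

/-- The inequality-constraint rows of the system defining `PP(κ±)` applied to `x`:
the lower and upper cluster-size constraints and the nonnegativity constraints. -/
def PPpmIneq {k n : ℕ} (x : Fin k × Fin n → ℝ) : Fin k ⊕ Fin k ⊕ Fin k × Fin n → ℝ :=
  Sum.elim (fun i => -(∑ j, x (i, j)))
    (Sum.elim (fun i => ∑ j, x (i, j)) fun p => -(x p))

/-- `g` is a circuit of the constraint system defining `PP(κ±)`: `g` is a nonzero element of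
the kernel of the equality constraints with coprime integer components such that `B g` is
support-minimal, where `B` collects the inequality constraints. -/
def IsCircuitPPpm {k n : ℕ} (g : Fin k × Fin n → ℝ) : Prop :=
  (∀ j, ∑ i, g (i, j) = 0) ∧ g ≠ 0 ∧
  (∃ gz : Fin k × Fin n → ℤ, (∀ p, g p = (gz p : ℝ)) ∧ Finset.univ.gcd gz = 1) ∧
  ¬ ∃ y : Fin k × Fin n → ℝ, (∀ j, ∑ i, y (i, j) = 0) ∧ y ≠ 0 ∧
      {r | PPpmIneq y r ≠ 0} ⊂ {r | PPpmIneq g r ≠ 0}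

/-- `g` describes a single sequential movement of items along distinct clusters
`c 0, c 1, …, c m` via distinct items `jj 1, …, jj m`. -/
def IsSequentialMovement {k n : ℕ} (g : Fin k × Fin n → ℝ) : Prop :=
  ∃ (m : ℕ) (_ : 1 ≤ m) (c : Fin (m + 1) → Fin k) (jj : Fin m → Fin n),
    Function.Injective c ∧ Function.Injective jj ∧
    g = ∑ t : Fin m,
      (Pi.single (c t.succ, jj t) (1 : ℝ) - Pi.single (c t.castSucc, jj t) (1 : ℝ))

/-- `g` describes a single cyclical exchange of items among distinct clusters
`c 0, …, c (m-1)` via distinct items `jj 0, …, jj (m-1)`. -/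
def IsCyclicalExchange {k n : ℕ} (g : Fin k × Fin n → ℝ) : Prop :=
  ∃ (m : ℕ) (hm : 2 ≤ m) (c : Fin m → Fin k) (jj : Fin m → Fin n),
    Function.Injective c ∧ Function.Injective jj ∧
    g = ∑ t : Fin m,
      (Pi.single (c ⟨(t.1 + 1) % m, Nat.mod_lt _ (by omega)⟩, jj t) (1 : ℝ) -
        Pi.single (c t, jj t) (1 : ℝ))


open Finset

section Aux
variable {k n : ℕ}

lemma sum_single_col (a : Fin k) (b j : Fin n) :
    ∑ i : Fin k, (Pi.single (a, b) (1:ℝ) : Fin k × Fin n → ℝ) (i, j) = if j = b then 1 else 0 := by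
  simp only [Pi.single_apply, Prod.mk.injEq]
  by_cases hj : j = b
  · subst hj
    simp
  · simp [hj]

lemma sum_single_row (a : Fin k) (b : Fin n) (i : Fin k) :
    ∑ j : Fin n, (Pi.single (a, b) (1:ℝ) : Fin k × Fin n → ℝ) (i, j) = if i = a then 1 else 0 := by
  simp only [Pi.single_apply, Prod.mk.injEq]
  by_cases hi : i = a
  · subst hi
    simp
  · simp [hi]

lemma telescope {m : ℕ} (F : Fin (m+1) → ℝ) :
    ∑ t : Fin m, (F t.succ - F t.castSucc) = F (Fin.last m) - F 0 := by
  classical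
  set G : ℕ → ℝ := fun u => if h : u < m + 1 then F ⟨u, h⟩ else 0 with hG
  have h1 : ∀ t : Fin m, F t.succ - F t.castSucc = G (t.1 + 1) - G t.1 := by
    intro t
    have ht1 : t.1 + 1 < m + 1 := by omega
    have ht2 : t.1 < m + 1 := by omega
    simp only [hG, dif_pos ht1, dif_pos ht2]
    rfl
  calc ∑ t : Fin m, (F t.succ - F t.castSucc)
      = ∑ t : Fin m, (G (t.1 + 1) - G t.1) := Finset.sum_congr rfl fun t _ => h1 t
    _ = ∑ u ∈ Finset.range m, (G (u + 1) - G u) :=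
        Fin.sum_univ_eq_sum_range (fun u => G (u+1) - G u) m
    _ = G m - G 0 := Finset.sum_range_sub G m
    _ = F (Fin.last m) - F 0 := by
        simp only [hG]
        rw [dif_pos (by omega : m < m + 1), dif_pos (by omega : 0 < m + 1)]
        rfl

lemma sum_indicator_eq_one {ι : Type*} [Fintype ι] {α : Type*} [DecidableEq α]
    {A : ι → α} (hA : Function.Injective A) (s : ι) :
    (∑ t : ι, if A s = A t then (1:ℝ) else 0) = 1 := by
  classical
  have h : ∀ t, (if A s = A t then (1:ℝ) else 0) = if s = t then 1 else 0 := by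
    intro t
    by_cases hst : s = t
    · simp [hst]
    · simp [hst, hA.ne hst]
  rw [Finset.sum_congr rfl fun t _ => h t]
  simp

lemma sum_indicator_eq_zero {ι : Type*} [Fintype ι] {α : Type*} [DecidableEq α]
    {A : ι → α} {p : α} (h : ∀ t, p ≠ A t) :
    (∑ t : ι, if p = A t then (1:ℝ) else 0) = 0 := by
  apply Finset.sum_eq_zero
  intro t _
  simp [h t]

end Aux

section Vecs
variable {k n : ℕ}

/-- The vector of a sequential movement. -/
def seqVec (m : ℕ) (c : Fin (m + 1) → Fin k) (jj : Fin m → Fin n) :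
    Fin k × Fin n → ℝ :=
  ∑ t : Fin m,
    (Pi.single (c t.succ, jj t) (1 : ℝ) - Pi.single (c t.castSucc, jj t) (1 : ℝ))

/-- Successor index in a cycle. -/
def nxt {m : ℕ} (hm : 0 < m) (t : Fin m) : Fin m := ⟨(t.1 + 1) % m, Nat.mod_lt _ hm⟩

/-- The vector of a cyclical exchange. -/
def cycVec (m : ℕ) (hm : 2 ≤ m) (c : Fin m → Fin k) (jj : Fin m → Fin n) :
    Fin k × Fin n → ℝ :=
  ∑ t : Fin m,
    (Pi.single (c (nxt (by omega) t), jj t) (1 : ℝ) - Pi.single (c t, jj t) (1 : ℝ))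

lemma nxt_ne {m : ℕ} (hm : 2 ≤ m) (t : Fin m) : nxt (by omega) t ≠ t := by
  intro h
  have h2 := congrArg Fin.val h
  simp only [nxt] at h2
  rcases Nat.lt_or_ge (t.1 + 1) m with h3 | h3
  · rw [Nat.mod_eq_of_lt h3] at h2; omega
  · have ht := t.2
    have : t.1 + 1 = m := by omega
    rw [this, Nat.mod_self] at h2
    omega

lemma nxt_injective {m : ℕ} (hm : 0 < m) : Function.Injective (nxt hm) := by
  intro a b h
  have h2 := congrArg Fin.val h
  simp only [nxt] at h2
  have ha := a.2; have hb := b.2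
  apply Fin.ext
  rcases Nat.lt_or_ge (a.1 + 1) m with h3 | h3 <;>
    rcases Nat.lt_or_ge (b.1 + 1) m with h4 | h4
  · rw [Nat.mod_eq_of_lt h3, Nat.mod_eq_of_lt h4] at h2; omega
  · have : b.1 + 1 = m := by omega
    rw [Nat.mod_eq_of_lt h3, this, Nat.mod_self] at h2; omega
  · have : a.1 + 1 = m := by omega
    rw [this, Nat.mod_self, Nat.mod_eq_of_lt h4] at h2; omega
  · omega

lemma nxt_bijective {m : ℕ} (hm : 0 < m) : Function.Bijective (nxt hm) :=
  (Finite.injective_iff_bijective).1 (nxt_injective hm)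

section SeqLemmas
variable {m : ℕ} (c : Fin (m + 1) → Fin k) (jj : Fin m → Fin n)

lemma seqVec_apply (p : Fin k × Fin n) :
    seqVec m c jj p = ∑ t : Fin m,
      ((if p = (c t.succ, jj t) then (1:ℝ) else 0) -
        (if p = (c t.castSucc, jj t) then 1 else 0)) := by
  simp [seqVec, Finset.sum_apply, Pi.single_apply]

lemma seqVec_colsum (j : Fin n) : ∑ i, seqVec m c jj (i, j) = 0 := by
  have h : ∀ i : Fin k, seqVec m c jj (i, j) =
      ∑ t : Fin m, ((Pi.single (c t.succ, jj t) (1:ℝ) : Fin k × Fin n → ℝ) (i, j) -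
        (Pi.single (c t.castSucc, jj t) (1:ℝ) : Fin k × Fin n → ℝ) (i, j)) := by
    intro i; simp [seqVec, Finset.sum_apply]
  rw [Finset.sum_congr rfl fun i _ => h i, Finset.sum_comm]
  apply Finset.sum_eq_zero
  intro t _
  rw [Finset.sum_sub_distrib, sum_single_col, sum_single_col, sub_self]

lemma seqVec_rowsum (i : Fin k) :
    ∑ j, seqVec m c jj (i, j) =
      (if i = c (Fin.last m) then (1:ℝ) else 0) - (if i = c 0 then 1 else 0) := by
  have h : ∀ j : Fin n, seqVec m c jj (i, j) =
      ∑ t : Fin m, ((Pi.single (c t.succ, jj t) (1:ℝ) : Fin k × Fin n → ℝ) (i, j) -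
        (Pi.single (c t.castSucc, jj t) (1:ℝ) : Fin k × Fin n → ℝ) (i, j)) := by
    intro j; simp [seqVec, Finset.sum_apply]
  rw [Finset.sum_congr rfl fun j _ => h j, Finset.sum_comm]
  have h2 : ∀ t : Fin m,
      (∑ j, ((Pi.single (c t.succ, jj t) (1:ℝ) : Fin k × Fin n → ℝ) (i, j) -
        (Pi.single (c t.castSucc, jj t) (1:ℝ) : Fin k × Fin n → ℝ) (i, j))) =
      (fun s : Fin (m+1) => if i = c s then (1:ℝ) else 0) t.succ -
      (fun s : Fin (m+1) => if i = c s then (1:ℝ) else 0) t.castSucc := by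
    intro t
    rw [Finset.sum_sub_distrib, sum_single_row, sum_single_row]
  rw [Finset.sum_congr rfl fun t _ => h2 t]
  exact telescope (fun s : Fin (m+1) => if i = c s then (1:ℝ) else 0)

variable {c jj}

lemma succ_ne_castSucc (t s : Fin m) : (t.succ : Fin (m+1)) ≠ s.castSucc ∨ t ≠ s := by
  by_cases h : t = s
  · subst h
    left
    intro hh
    have := congrArg Fin.val hh
    simp at this
  · right; exact h

lemma seqVec_apply_pos (hc : Function.Injective c) (hjj : Function.Injective jj) (t : Fin m) :
    seqVec m c jj (c t.succ, jj t) = 1 := by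
  rw [seqVec_apply, Finset.sum_sub_distrib]
  have hA : Function.Injective (fun t : Fin m => ((c t.succ, jj t) : Fin k × Fin n)) := by
    intro a b hab
    exact hjj (congrArg Prod.snd hab)
  rw [sum_indicator_eq_one hA t]
  have h0 : (∑ t' : Fin m, if ((c t.succ, jj t) : Fin k × Fin n) = (c t'.castSucc, jj t') then (1:ℝ) else 0) = 0 := by
    apply sum_indicator_eq_zero
    intro t' hh
    have h1 : jj t = jj t' := congrArg Prod.snd hh
    have h2 : t = t' := hjj h1
    subst h2
    have h3 : c t.succ = c t.castSucc := congrArg Prod.fst hh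
    have h4 : (t.succ : Fin (m+1)) = t.castSucc := hc h3
    have := congrArg Fin.val h4
    simp at this
  rw [h0, sub_zero]

lemma seqVec_apply_neg (hc : Function.Injective c) (hjj : Function.Injective jj) (t : Fin m) :
    seqVec m c jj (c t.castSucc, jj t) = -1 := by
  rw [seqVec_apply, Finset.sum_sub_distrib]
  have hB : Function.Injective (fun t : Fin m => ((c t.castSucc, jj t) : Fin k × Fin n)) := by
    intro a b hab
    exact hjj (congrArg Prod.snd hab)
  rw [sum_indicator_eq_one hB t]
  have h0 : (∑ t' : Fin m, if ((c t.castSucc, jj t) : Fin k × Fin n) = (c t'.succ, jj t') then (1:ℝ) else 0) = 0 := by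
    apply sum_indicator_eq_zero
    intro t' hh
    have h1 : jj t = jj t' := congrArg Prod.snd hh
    have h2 : t = t' := hjj h1
    subst h2
    have h3 : c t.castSucc = c t.succ := congrArg Prod.fst hh
    have h4 : (t.castSucc : Fin (m+1)) = t.succ := hc h3
    have := congrArg Fin.val h4
    simp at this
  rw [h0, zero_sub]

lemma seqVec_apply_zero (p : Fin k × Fin n)
    (h : ∀ t : Fin m, p ≠ (c t.succ, jj t) ∧ p ≠ (c t.castSucc, jj t)) :
    seqVec m c jj p = 0 := by
  rw [seqVec_apply, Finset.sum_sub_distrib,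
    sum_indicator_eq_zero (fun t => (h t).1), sum_indicator_eq_zero (fun t => (h t).2), sub_self]

end SeqLemmas

section CycLemmas
variable {m : ℕ} (hm : 2 ≤ m) (c : Fin m → Fin k) (jj : Fin m → Fin n)

lemma cycVec_apply (p : Fin k × Fin n) :
    cycVec m hm c jj p = ∑ t : Fin m,
      ((if p = (c (nxt (by omega) t), jj t) then (1:ℝ) else 0) -
        (if p = (c t, jj t) then 1 else 0)) := by
  simp [cycVec, Finset.sum_apply, Pi.single_apply]

lemma cycVec_colsum (j : Fin n) : ∑ i, cycVec m hm c jj (i, j) = 0 := by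
  have h : ∀ i : Fin k, cycVec m hm c jj (i, j) =
      ∑ t : Fin m, ((Pi.single (c (nxt (by omega) t), jj t) (1:ℝ) : Fin k × Fin n → ℝ) (i, j) -
        (Pi.single (c t, jj t) (1:ℝ) : Fin k × Fin n → ℝ) (i, j)) := by
    intro i; simp [cycVec, Finset.sum_apply]
  rw [Finset.sum_congr rfl fun i _ => h i, Finset.sum_comm]
  apply Finset.sum_eq_zero
  intro t _
  rw [Finset.sum_sub_distrib, sum_single_col, sum_single_col, sub_self]

lemma cycVec_rowsum (i : Fin k) : ∑ j, cycVec m hm c jj (i, j) = 0 := by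
  have h : ∀ j : Fin n, cycVec m hm c jj (i, j) =
      ∑ t : Fin m, ((Pi.single (c (nxt (by omega) t), jj t) (1:ℝ) : Fin k × Fin n → ℝ) (i, j) -
        (Pi.single (c t, jj t) (1:ℝ) : Fin k × Fin n → ℝ) (i, j)) := by
    intro j; simp [cycVec, Finset.sum_apply]
  rw [Finset.sum_congr rfl fun j _ => h j, Finset.sum_comm]
  have h2 : ∀ t : Fin m,
      (∑ j, ((Pi.single (c (nxt (by omega) t), jj t) (1:ℝ) : Fin k × Fin n → ℝ) (i, j) -
        (Pi.single (c t, jj t) (1:ℝ) : Fin k × Fin n → ℝ) (i, j))) =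
      (if i = c (nxt (by omega : 0 < m) t) then (1:ℝ) else 0) - (if i = c t then 1 else 0) := by
    intro t
    rw [Finset.sum_sub_distrib, sum_single_row, sum_single_row]
  rw [Finset.sum_congr rfl fun t _ => h2 t, Finset.sum_sub_distrib]
  rw [Fintype.sum_bijective (nxt (by omega : 0 < m)) (nxt_bijective _)
    (fun t => if i = c (nxt (by omega : 0 < m) t) then (1:ℝ) else 0)
    (fun t => if i = c t then (1:ℝ) else 0) (fun t => rfl)]
  rw [sub_self]

variable {c jj}

lemma cycVec_apply_pos (hc : Function.Injective c) (hjj : Function.Injective jj) (t : Fin m) :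
    cycVec m hm c jj (c (nxt (by omega) t), jj t) = 1 := by
  rw [cycVec_apply, Finset.sum_sub_distrib]
  have hA : Function.Injective
      (fun t : Fin m => ((c (nxt (by omega : 0 < m) t), jj t) : Fin k × Fin n)) := by
    intro a b hab
    exact hjj (congrArg Prod.snd hab)
  rw [sum_indicator_eq_one hA t]
  have h0 : (∑ t' : Fin m, if ((c (nxt (by omega : 0 < m) t), jj t) : Fin k × Fin n) = (c t', jj t')
      then (1:ℝ) else 0) = 0 := by
    apply sum_indicator_eq_zero
    intro t' hh
    have h2 : t = t' := hjj (congrArg Prod.snd hh)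
    subst h2
    exact nxt_ne hm t (hc (congrArg Prod.fst hh))
  rw [h0, sub_zero]

lemma cycVec_apply_neg (hc : Function.Injective c) (hjj : Function.Injective jj) (t : Fin m) :
    cycVec m hm c jj (c t, jj t) = -1 := by
  rw [cycVec_apply, Finset.sum_sub_distrib]
  have hB : Function.Injective (fun t : Fin m => ((c t, jj t) : Fin k × Fin n)) := by
    intro a b hab
    exact hjj (congrArg Prod.snd hab)
  rw [sum_indicator_eq_one hB t]
  have h0 : (∑ t' : Fin m, if ((c t, jj t) : Fin k × Fin n) = (c (nxt (by omega : 0 < m) t'), jj t')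
      then (1:ℝ) else 0) = 0 := by
    apply sum_indicator_eq_zero
    intro t' hh
    have h2 : t = t' := hjj (congrArg Prod.snd hh)
    subst h2
    exact nxt_ne hm t ((hc (congrArg Prod.fst hh)).symm)
  rw [h0, zero_sub]

lemma cycVec_apply_zero (p : Fin k × Fin n)
    (h : ∀ t : Fin m, p ≠ (c (nxt (by omega) t), jj t) ∧ p ≠ (c t, jj t)) :
    cycVec m hm c jj p = 0 := by
  rw [cycVec_apply, Finset.sum_sub_distrib,
    sum_indicator_eq_zero (fun t => (h t).1), sum_indicator_eq_zero (fun t => (h t).2), sub_self]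

end CycLemmas
end Vecs

section Rigid
variable {k n : ℕ}

lemma rigid_seq {m : ℕ} (hm : 1 ≤ m) {c : Fin (m+1) → Fin k} {jj : Fin m → Fin n}
    (hc : Function.Injective c) (hjj : Function.Injective jj)
    (y : Fin k × Fin n → ℝ) (hcol : ∀ j, ∑ i, y (i, j) = 0)
    (hsupp : ∀ p, seqVec m c jj p = 0 → y p = 0)
    (hrow : ∀ t : Fin (m+1), t ≠ 0 → t ≠ Fin.last m → ∑ j, y (c t, j) = 0) :
    y = y (c (⟨0, hm⟩ : Fin m).succ, jj ⟨0, hm⟩) • seqVec m c jj := by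
  classical
  set t0 : Fin m := ⟨0, hm⟩ with ht0
  set b : Fin m → ℝ := fun t => y (c t.succ, jj t) with hb
  have hA : ∀ t : Fin m, y (c t.castSucc, jj t) = -(b t) := by
    intro t
    have hcolj := hcol (jj t)
    have hne : c t.castSucc ≠ c t.succ := by
      intro h
      have := congrArg Fin.val (hc h)
      simp at this
    have hsum : ∑ i, y (i, jj t) = y (c t.castSucc, jj t) + y (c t.succ, jj t) := by
      apply Finset.sum_eq_add (c t.castSucc) (c t.succ) hne
      · intro i _ hi
        apply hsupp
        apply seqVec_apply_zero
        intro t'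
        constructor
        · intro hh
          have h2 : t = t' := hjj (congrArg Prod.snd hh)
          subst h2
          exact hi.2 (congrArg Prod.fst hh)
        · intro hh
          have h2 : t = t' := hjj (congrArg Prod.snd hh)
          subst h2
          exact hi.1 (congrArg Prod.fst hh)
      · intro h; exact absurd (Finset.mem_univ _) h
      · intro h; exact absurd (Finset.mem_univ _) h
    rw [hsum] at hcolj
    simp only [hb]
    linarith
  have hB : ∀ u v : Fin m, u.1 + 1 = v.1 → b u = b v := by
    intro u v huv
    have hne0 : (v.castSucc : Fin (m+1)) ≠ 0 := by
      intro h
      have := congrArg Fin.val h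
      simp at this
      omega
    have hnel : (v.castSucc : Fin (m+1)) ≠ Fin.last m := by
      intro h
      have := congrArg Fin.val h
      simp at this
      have := v.2
      omega
    have hrv := hrow v.castSucc hne0 hnel
    have husucc : (u.succ : Fin (m+1)) = v.castSucc := by
      apply Fin.ext
      simpa using huv
    have hvu : v ≠ u := by
      intro h; subst h; omega
    have hsum : ∑ j, y (c v.castSucc, j) = y (c v.castSucc, jj v) + y (c v.castSucc, jj u) := by
      apply Finset.sum_eq_add (jj v) (jj u) (fun h => hvu (hjj h))
      · intro j _ hj
        apply hsupp
        apply seqVec_apply_zero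
        intro t'
        constructor
        · intro hh
          have h2 : (v.castSucc : Fin (m+1)) = t'.succ := hc (congrArg Prod.fst hh)
          have h3 : t' = u := by
            apply Fin.ext
            have := congrArg Fin.val h2
            simp at this
            omega
          subst h3
          exact hj.2 (congrArg Prod.snd hh)
        · intro hh
          have h2 : (v.castSucc : Fin (m+1)) = t'.castSucc := hc (congrArg Prod.fst hh)
          have h3 : t' = v := by
            apply Fin.ext
            have := congrArg Fin.val h2
            simp at this
            omega
          subst h3
          exact hj.1 (congrArg Prod.snd hh)
      · intro h; exact absurd (Finset.mem_univ _) h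
      · intro h; exact absurd (Finset.mem_univ _) h
    rw [hsum, hA v] at hrv
    have : y (c v.castSucc, jj u) = b u := by rw [← husucc]
    rw [this] at hrv
    linarith
  have hC : ∀ t : Fin m, b t = b t0 := by
    have key : ∀ i : ℕ, ∀ t : Fin m, t.1 = i → b t = b t0 := by
      intro i
      induction i with
      | zero => intro t ht; congr 1; exact Fin.ext ht
      | succ i ih =>
        intro t ht
        have hi : i < m := by have := t.2; omega
        have := hB ⟨i, hi⟩ t (by simp [ht])
        rw [← this]
        exact ih ⟨i, hi⟩ rfl
    exact fun t => key t.1 t rfl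
  funext p
  by_cases h1 : ∃ t : Fin m, p = ((c t.succ, jj t) : Fin k × Fin n)
  · obtain ⟨t, rfl⟩ := h1
    rw [Pi.smul_apply, seqVec_apply_pos hc hjj, smul_eq_mul, mul_one]
    exact hC t
  · by_cases h2 : ∃ t : Fin m, p = ((c t.castSucc, jj t) : Fin k × Fin n)
    · obtain ⟨t, rfl⟩ := h2
      rw [Pi.smul_apply, seqVec_apply_neg hc hjj, smul_eq_mul, mul_neg_one]
      rw [hA t, hC t]
    · push_neg at h1 h2
      rw [Pi.smul_apply, seqVec_apply_zero p (fun t => ⟨h1 t, h2 t⟩), smul_eq_mul, mul_zero]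
      exact hsupp p (seqVec_apply_zero p (fun t => ⟨h1 t, h2 t⟩))

lemma rigid_cyc {m : ℕ} (hm : 2 ≤ m) {c : Fin m → Fin k} {jj : Fin m → Fin n}
    (hc : Function.Injective c) (hjj : Function.Injective jj)
    (y : Fin k × Fin n → ℝ) (hcol : ∀ j, ∑ i, y (i, j) = 0)
    (hsupp : ∀ p, cycVec m hm c jj p = 0 → y p = 0)
    (hrow : ∀ i, ∑ j, y (i, j) = 0) :
    y = y (c (nxt (by omega) ⟨0, by omega⟩), jj ⟨0, by omega⟩) • cycVec m hm c jj := by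
  classical
  have hm0 : 0 < m := by omega
  set t0 : Fin m := ⟨0, by omega⟩ with ht0
  set b : Fin m → ℝ := fun t => y (c (nxt hm0 t), jj t) with hb
  have hA : ∀ t : Fin m, y (c t, jj t) = -(b t) := by
    intro t
    have hcolj := hcol (jj t)
    have hne : c t ≠ c (nxt hm0 t) := by
      intro h
      exact nxt_ne hm t (hc h.symm)
    have hsum : ∑ i, y (i, jj t) = y (c t, jj t) + y (c (nxt hm0 t), jj t) := by
      apply Finset.sum_eq_add (c t) (c (nxt hm0 t)) hne
      · intro i _ hi
        apply hsupp
        apply cycVec_apply_zero hm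
        intro t'
        constructor
        · intro hh
          have h2 : t = t' := hjj (congrArg Prod.snd hh)
          subst h2
          exact hi.2 (congrArg Prod.fst hh)
        · intro hh
          have h2 : t = t' := hjj (congrArg Prod.snd hh)
          subst h2
          exact hi.1 (congrArg Prod.fst hh)
      · intro h; exact absurd (Finset.mem_univ _) h
      · intro h; exact absurd (Finset.mem_univ _) h
    rw [hsum] at hcolj
    simp only [hb]
    linarith
  have hB : ∀ u v : Fin m, nxt hm0 u = v → b u = b v := by
    intro u v huv
    have hrv := hrow (c v)
    have hvu : v ≠ u := fun h => nxt_ne hm u (huv.trans h)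
    have hsum : ∑ j, y (c v, j) = y (c v, jj v) + y (c v, jj u) := by
      apply Finset.sum_eq_add (jj v) (jj u) (fun h => hvu (hjj h))
      · intro j _ hj
        apply hsupp
        apply cycVec_apply_zero hm
        intro t'
        constructor
        · intro hh
          have h2 : c v = c (nxt hm0 t') := congrArg Prod.fst hh
          have h3 : t' = u := by
            apply nxt_injective hm0
            rw [huv]
            exact (hc h2).symm
          subst h3
          exact hj.2 (congrArg Prod.snd hh)
        · intro hh
          have h3 : t' = v := (hc (congrArg Prod.fst hh)).symm
          subst h3
          exact hj.1 (congrArg Prod.snd hh)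
      · intro h; exact absurd (Finset.mem_univ _) h
      · intro h; exact absurd (Finset.mem_univ _) h
    rw [hsum, hA v] at hrv
    have h4 : y (c v, jj u) = b u := by rw [← huv]
    rw [h4] at hrv
    linarith
  have hC : ∀ t : Fin m, b t = b t0 := by
    have key : ∀ i : ℕ, ∀ t : Fin m, t.1 = i → b t = b t0 := by
      intro i
      induction i with
      | zero => intro t ht; congr 1; exact Fin.ext ht
      | succ i ih =>
        intro t ht
        have hi : i < m := by have := t.2; omega
        have htlt := t.2
        have hnx : nxt hm0 ⟨i, hi⟩ = t := by
          apply Fin.ext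
          simp only [nxt]
          rw [Nat.mod_eq_of_lt (by omega : i + 1 < m)]
          omega
        have := hB ⟨i, hi⟩ t hnx
        rw [← this]
        exact ih ⟨i, hi⟩ rfl
    exact fun t => key t.1 t rfl
  funext p
  by_cases h1 : ∃ t : Fin m, p = ((c (nxt hm0 t), jj t) : Fin k × Fin n)
  · obtain ⟨t, rfl⟩ := h1
    rw [Pi.smul_apply]
    have : cycVec m hm c jj (c (nxt hm0 t), jj t) = 1 := cycVec_apply_pos hm hc hjj t
    rw [this, smul_eq_mul, mul_one]
    exact hC t
  · by_cases h2 : ∃ t : Fin m, p = ((c t, jj t) : Fin k × Fin n)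
    · obtain ⟨t, rfl⟩ := h2
      rw [Pi.smul_apply]
      have : cycVec m hm c jj (c t, jj t) = -1 := cycVec_apply_neg hm hc hjj t
      rw [this, smul_eq_mul, mul_neg_one]
      rw [hA t, hC t]
    · push_neg at h1 h2
      have hz : cycVec m hm c jj p = 0 := cycVec_apply_zero hm p (fun t => ⟨h1 t, h2 t⟩)
      rw [Pi.smul_apply, hz, smul_eq_mul, mul_zero]
      exact hsupp p hz

end Rigid

section Walk
variable {k n : ℕ}

/-- A step of a movement: item `j` leaves cluster `i` (negative entry) and enters
cluster `i'` (positive entry). -/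
def Stp (y : Fin k × Fin n → ℝ) (i i' : Fin k) (j : Fin n) : Prop :=
  y (i, j) < 0 ∧ 0 < y (i', j)

lemma shortcut (y : Fin k × Fin n → ℝ) :
    ∀ m : ℕ, 1 ≤ m → ∀ (c : Fin (m+1) → Fin k) (jj : Fin m → Fin n),
      (∀ t : Fin m, Stp y (c t.castSucc) (c t.succ) (jj t)) →
      ∃ (m' : ℕ) (_ : 1 ≤ m') (ρ : Fin (m'+1) → Fin (m+1)) (jj' : Fin m' → Fin n),
        StrictMono ρ ∧ ρ 0 = 0 ∧ ρ (Fin.last m') = Fin.last m ∧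
        Function.Injective jj' ∧
        ∀ t : Fin m', Stp y (c (ρ t.castSucc)) (c (ρ t.succ)) (jj' t) := by
  intro m
  induction m using Nat.strong_induction_on with
  | _ m IH =>
  intro hm c jj hstep
  by_cases hinj : Function.Injective jj
  · exact ⟨m, hm, id, jj, strictMono_id, rfl, rfl, hinj, fun t => hstep t⟩
  have hcoll : ∃ a b : Fin m, jj a = jj b ∧ a.1 < b.1 := by
    simp only [Function.Injective, not_forall] at hinj
    obtain ⟨a, b, hab, hne⟩ := hinj
    have hvne : a.1 ≠ b.1 := fun hh => hne (Fin.ext hh)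
    rcases Nat.lt_or_ge a.1 b.1 with h | h
    · exact ⟨a, b, hab, h⟩
    · exact ⟨b, a, hab.symm, by omega⟩
  obtain ⟨a, b, hab, hlt⟩ := hcoll
  have hAm : a.1 < m := a.2
  have hBm : b.1 < m := b.2
  set m1 := m - (b.1 - a.1) with hm1def
  have hm1a : a.1 < m1 := by omega
  have hm1le : 1 ≤ m1 := by omega
  have hm1lt : m1 < m := by omega
  have hρex : ∃ ρ0 : Fin (m1+1) → Fin (m+1),
      ∀ u, (ρ0 u).1 = if u.1 ≤ a.1 then u.1 else u.1 + (b.1 - a.1) := by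
    refine ⟨fun u => if h : u.1 ≤ a.1 then ⟨u.1, by omega⟩
      else ⟨u.1 + (b.1 - a.1), by have := u.2; omega⟩, fun u => ?_⟩
    dsimp only
    by_cases h : u.1 ≤ a.1
    · rw [dif_pos h, if_pos h]
    · rw [dif_neg h, if_neg h]
  obtain ⟨ρ0, hρ0val⟩ := hρex
  have hjex : ∃ jj0 : Fin m1 → Fin n, ∀ u : Fin m1,
      (∀ h2 : u.1 < m, u.1 ≤ a.1 → jj0 u = jj ⟨u.1, h2⟩) ∧
      (∀ h2 : u.1 + (b.1 - a.1) < m, ¬ u.1 ≤ a.1 → jj0 u = jj ⟨u.1 + (b.1 - a.1), h2⟩) := by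
    refine ⟨fun u => if h : u.1 ≤ a.1 then jj ⟨u.1, by omega⟩
      else jj ⟨u.1 + (b.1 - a.1), by have := u.2; omega⟩, fun u => ⟨fun h2 hle => ?_, fun h2 hgt => ?_⟩⟩
    · dsimp only
      rw [dif_pos hle]
    · dsimp only
      rw [dif_neg hgt]
  obtain ⟨jj0, hjj0val⟩ := hjex
  have hρ0mono : StrictMono ρ0 := by
    intro u v huv
    rw [Fin.lt_def, hρ0val, hρ0val]
    rw [Fin.lt_def] at huv
    split <;> split <;> omega
  have hstep0 : ∀ t : Fin m1, Stp y ((c ∘ ρ0) t.castSucc) ((c ∘ ρ0) t.succ) (jj0 t) := by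
    intro t
    have htm := t.2
    rcases lt_trichotomy t.1 a.1 with h | h | h
    · have e1 : ρ0 t.castSucc = (⟨t.1, by omega⟩ : Fin m).castSucc := by
        apply Fin.ext
        rw [hρ0val]
        simp only [Fin.coe_castSucc]
        rw [if_pos (by omega)]
      have e2 : ρ0 t.succ = (⟨t.1, by omega⟩ : Fin m).succ := by
        apply Fin.ext
        rw [hρ0val]
        simp only [Fin.val_succ]
        rw [if_pos (by omega)]
      have e3 : jj0 t = jj ⟨t.1, by omega⟩ := (hjj0val t).1 (by omega) (by omega)
      show Stp y (c (ρ0 t.castSucc)) (c (ρ0 t.succ)) (jj0 t)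
      rw [e1, e2, e3]
      exact hstep ⟨t.1, by omega⟩
    · have e1 : ρ0 t.castSucc = a.castSucc := by
        apply Fin.ext
        rw [hρ0val]
        simp only [Fin.coe_castSucc]
        rw [if_pos (by omega)]
        omega
      have e2 : ρ0 t.succ = b.succ := by
        apply Fin.ext
        rw [hρ0val]
        simp only [Fin.val_succ]
        rw [if_neg (by omega)]
        omega
      have e3 : jj0 t = jj a := by
        rw [(hjj0val t).1 (by omega) (by omega)]
        congr 1
        exact Fin.ext h
      show Stp y (c (ρ0 t.castSucc)) (c (ρ0 t.succ)) (jj0 t)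
      rw [e1, e2, e3]
      exact ⟨(hstep a).1, hab ▸ (hstep b).2⟩
    · have hidx : t.1 + (b.1 - a.1) < m := by omega
      have e1 : ρ0 t.castSucc = (⟨t.1 + (b.1 - a.1), hidx⟩ : Fin m).castSucc := by
        apply Fin.ext
        rw [hρ0val]
        simp only [Fin.coe_castSucc]
        rw [if_neg (by omega)]
      have e2 : ρ0 t.succ = (⟨t.1 + (b.1 - a.1), hidx⟩ : Fin m).succ := by
        apply Fin.ext
        rw [hρ0val]
        simp only [Fin.val_succ]
        rw [if_neg (by omega)]
        omega
      have e3 : jj0 t = jj ⟨t.1 + (b.1 - a.1), hidx⟩ := (hjj0val t).2 hidx (by omega)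
      show Stp y (c (ρ0 t.castSucc)) (c (ρ0 t.succ)) (jj0 t)
      rw [e1, e2, e3]
      exact hstep ⟨t.1 + (b.1 - a.1), hidx⟩
  obtain ⟨m', hm', ρ1, jj', hmono1, h01, hl1, hinj', hstep'⟩ :=
    IH m1 hm1lt hm1le (c ∘ ρ0) jj0 hstep0
  refine ⟨m', hm', ρ0 ∘ ρ1, jj', hρ0mono.comp hmono1, ?_, ?_, hinj', fun t => hstep' t⟩
  · show ρ0 (ρ1 0) = 0
    rw [h01]
    apply Fin.ext
    rw [hρ0val]
    simp
  · show ρ0 (ρ1 (Fin.last m')) = Fin.last m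
    rw [hl1]
    apply Fin.ext
    rw [hρ0val]
    simp only [Fin.val_last]
    rw [if_neg (by omega)]
    omega

end Walk

section Walk2
variable {k n : ℕ} (y : Fin k × Fin n → ℝ)

lemma exists_pos_of_neg (hcol : ∀ j, ∑ i, y (i, j) = 0) {i : Fin k} {j : Fin n}
    (h : y (i, j) < 0) : ∃ i', 0 < y (i', j) := by
  by_contra hcon
  push_neg at hcon
  have h2 : ∑ i', y (i', j) < ∑ _i' : Fin k, (0:ℝ) :=
    Finset.sum_lt_sum (fun i' _ => hcon i') ⟨i, Finset.mem_univ i, h⟩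
  rw [Finset.sum_const_zero] at h2
  rw [hcol j] at h2
  exact lt_irrefl _ h2

lemma exists_neg_of_pos (hcol : ∀ j, ∑ i, y (i, j) = 0) {i : Fin k} {j : Fin n}
    (h : 0 < y (i, j)) : ∃ i', y (i', j) < 0 := by
  by_contra hcon
  push_neg at hcon
  have h2 : ∑ _i' : Fin k, (0:ℝ) < ∑ i', y (i', j) :=
    Finset.sum_lt_sum (fun i' _ => hcon i') ⟨i, Finset.mem_univ i, h⟩
  rw [Finset.sum_const_zero] at h2
  rw [hcol j] at h2
  exact lt_irrefl _ h2

lemma exists_neg_in_row_of_rowneg {i : Fin k} (h : ∑ j, y (i, j) < 0) :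
    ∃ j, y (i, j) < 0 := by
  by_contra hcon
  push_neg at hcon
  have := Finset.sum_nonneg (fun j (_ : j ∈ Finset.univ) => hcon j)
  linarith

lemma exists_neg_in_row_of_pos {i : Fin k} (hle : ∑ j, y (i, j) ≤ 0) {j0 : Fin n}
    (h : 0 < y (i, j0)) : ∃ j, y (i, j) < 0 := by
  by_contra hcon
  push_neg at hcon
  have h2 : ∑ _j : Fin n, (0:ℝ) < ∑ j, y (i, j) :=
    Finset.sum_lt_sum (fun j _ => hcon j) ⟨j0, Finset.mem_univ j0, h⟩
  rw [Finset.sum_const_zero] at h2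
  linarith

lemma exists_rowneg (hcol : ∀ j, ∑ i, y (i, j) = 0) (h : ∃ i, ∑ j, y (i, j) ≠ 0) :
    ∃ i, ∑ j, y (i, j) < 0 := by
  have htot : ∑ i, ∑ j, y (i, j) = 0 := by
    rw [Finset.sum_comm]
    rw [Finset.sum_congr rfl fun j _ => hcol j, Finset.sum_const_zero]
  obtain ⟨i, hi⟩ := h
  rcases lt_trichotomy (∑ j, y (i, j)) 0 with h1 | h1 | h1
  · exact ⟨i, h1⟩
  · exact absurd h1 hi
  · by_contra hcon
    push_neg at hcon
    have h2 : ∑ _i : Fin k, (0:ℝ) < ∑ i, ∑ j, y (i, j) :=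
      Finset.sum_lt_sum (fun i' _ => hcon i') ⟨i, Finset.mem_univ i, h1⟩
    rw [Finset.sum_const_zero] at h2
    linarith

/-- A cleaned closed walk in the support of `y`. -/
def LoopGoal : Prop :=
  ∃ (m : ℕ) (_ : 1 ≤ m) (c : Fin (m+1) → Fin k) (jj : Fin m → Fin n),
    c 0 = c (Fin.last m) ∧
    (∀ u v : Fin (m+1), u.1 < m → v.1 < m → c u = c v → u = v) ∧
    Function.Injective jj ∧
    ∀ t : Fin m, Stp y (c t.castSucc) (c t.succ) (jj t)

/-- A cleaned path in the support of `y` between clusters of nonzero row sum. -/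
def SeqGoal : Prop :=
  ∃ (m : ℕ) (_ : 1 ≤ m) (c : Fin (m+1) → Fin k) (jj : Fin m → Fin n),
    Function.Injective c ∧ Function.Injective jj ∧
    (∀ t : Fin m, Stp y (c t.castSucc) (c t.succ) (jj t)) ∧
    (∑ j, y (c 0, j)) ≠ 0 ∧ (∑ j, y (c (Fin.last m), j)) ≠ 0

lemma ext_walk (hcol : ∀ j, ∑ i, y (i, j) = 0) :
    ∀ fuel : ℕ, ∀ m : ℕ, ∀ (c : Fin (m+1) → Fin k) (jj : Fin m → Fin n),
      k ≤ fuel + m + 1 →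
      Function.Injective c →
      (∀ t : Fin m, Stp y (c t.castSucc) (c t.succ) (jj t)) →
      (m = 0 → (∑ j, y (c 0, j)) < 0) →
      ((∑ j, y (c 0, j)) < 0 ∨ ∀ i, (∑ j, y (i, j)) = 0) →
      LoopGoal y ∨ SeqGoal y := by
  intro fuel
  induction fuel using Nat.strong_induction_on with
  | _ fuel IH =>
  intro m c jj hfuel hc hstep h0 hcase
  by_cases hre : 0 < ∑ j, y (c (Fin.last m), j)
  · -- a sequential movement has been found
    have hm : 1 ≤ m := by
      rcases Nat.eq_zero_or_pos m with hm0 | hm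
      · exfalso
        subst hm0
        have h00 := h0 rfl
        have : (Fin.last 0) = (0 : Fin 1) := rfl
        rw [this] at hre
        linarith
      · exact hm
    have hneg : ∑ j, y (c 0, j) < 0 := by
      rcases hcase with h | hall
      · exact h
      · exfalso
        rw [hall (c (Fin.last m))] at hre
        exact lt_irrefl _ hre
    obtain ⟨m', hm', ρ, jj', hmono, h0ρ, hlρ, hinj', hstep'⟩ := shortcut y m hm c jj hstep
    right
    refine ⟨m', hm', c ∘ ρ, jj', hc.comp hmono.injective, hinj', fun t => hstep' t, ?_, ?_⟩
    · show (∑ j, y (c (ρ 0), j)) ≠ 0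
      rw [h0ρ]
      exact ne_of_lt hneg
    · show (∑ j, y (c (ρ (Fin.last m')), j)) ≠ 0
      rw [hlρ]
      exact ne_of_gt hre
  · push_neg at hre
    have hj' : ∃ j', y (c (Fin.last m), j') < 0 := by
      rcases Nat.eq_zero_or_pos m with hm0 | hm
      · subst hm0
        have : (Fin.last 0) = (0 : Fin 1) := rfl
        rw [this]
        exact exists_neg_in_row_of_rowneg y (h0 rfl)
      · have hpos : 0 < y (c (Fin.last m), jj ⟨m-1, by omega⟩) := by
          have h2 := (hstep ⟨m-1, by omega⟩).2
          have he : ((⟨m-1, by omega⟩ : Fin m).succ : Fin (m+1)) = Fin.last m := by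
            apply Fin.ext
            simp only [Fin.val_succ, Fin.val_last]
            omega
          rwa [he] at h2
        exact exists_neg_in_row_of_pos y hre hpos
    obtain ⟨j', hj'neg⟩ := hj'
    obtain ⟨i', hi'pos⟩ := exists_pos_of_neg y hcol hj'neg
    by_cases hmem : ∃ s : Fin (m+1), c s = i'
    · -- close a loop
      left
      obtain ⟨s, hs⟩ := hmem
      have hsnl : s ≠ Fin.last m := by
        intro h
        rw [h] at hs
        rw [hs] at hj'neg
        linarith
      have hsm : s.1 < m := by
        have := s.2
        rcases Nat.lt_or_ge s.1 m with h | h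
        · exact h
        · exact absurd (Fin.ext (by omega : s.1 = m)) hsnl
      have hcLex : ∃ cL : Fin ((m - s.1 + 1) + 1) → Fin k, ∀ u,
          (∀ h2 : s.1 + u.1 < m + 1, u.1 ≤ m - s.1 → cL u = c ⟨s.1 + u.1, h2⟩) ∧
          (¬ u.1 ≤ m - s.1 → cL u = c s) := by
        refine ⟨fun u => if h : u.1 ≤ m - s.1 then c ⟨s.1 + u.1, by omega⟩ else c s,
          fun u => ⟨fun h2 hle => ?_, fun hgt => ?_⟩⟩
        · dsimp only
          rw [dif_pos hle]
        · dsimp only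
          rw [dif_neg hgt]
      obtain ⟨cL, hcLval⟩ := hcLex
      have hjLex : ∃ jjL : Fin (m - s.1 + 1) → Fin n, ∀ u,
          (∀ h2 : s.1 + u.1 < m, u.1 < m - s.1 → jjL u = jj ⟨s.1 + u.1, h2⟩) ∧
          (¬ u.1 < m - s.1 → jjL u = j') := by
        refine ⟨fun u => if h : u.1 < m - s.1 then jj ⟨s.1 + u.1, by omega⟩ else j',
          fun u => ⟨fun h2 hle => ?_, fun hgt => ?_⟩⟩
        · dsimp only
          rw [dif_pos hle]
        · dsimp only
          rw [dif_neg hgt]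
      obtain ⟨jjL, hjLval⟩ := hjLex
      have hstepL : ∀ t : Fin (m - s.1 + 1), Stp y (cL t.castSucc) (cL t.succ) (jjL t) := by
        intro t
        have htb := t.2
        rcases Nat.lt_or_ge t.1 (m - s.1) with h | h
        · have hidx : s.1 + t.1 < m := by omega
          have e1 : cL t.castSucc = c ((⟨s.1 + t.1, hidx⟩ : Fin m).castSucc) := by
            rw [(hcLval t.castSucc).1 (by simp only [Fin.coe_castSucc]; omega)
              (by simp only [Fin.coe_castSucc]; omega)]
            congr 1
            all_goals (apply Fin.ext; simp only [Fin.coe_castSucc, Fin.val_succ, Fin.val_last, Fin.val_zero]; all_goals omega)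
          have e2 : cL t.succ = c ((⟨s.1 + t.1, hidx⟩ : Fin m).succ) := by
            rw [(hcLval t.succ).1 (by simp only [Fin.val_succ]; omega)
              (by simp only [Fin.val_succ]; omega)]
            congr 1
            all_goals (apply Fin.ext; simp only [Fin.coe_castSucc, Fin.val_succ, Fin.val_last, Fin.val_zero]; all_goals omega)
          have e3 : jjL t = jj ⟨s.1 + t.1, hidx⟩ := (hjLval t).1 hidx h
          rw [e1, e2, e3]
          exact hstep ⟨s.1 + t.1, hidx⟩
        · have ht : t.1 = m - s.1 := by omega
          have e1 : cL t.castSucc = c (Fin.last m) := by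
            rw [(hcLval t.castSucc).1 (by simp only [Fin.coe_castSucc]; omega)
              (by simp only [Fin.coe_castSucc]; omega)]
            congr 1
            all_goals (apply Fin.ext; simp only [Fin.coe_castSucc, Fin.val_succ, Fin.val_last, Fin.val_zero]; all_goals omega)
          have e2 : cL t.succ = c s := by
            rw [(hcLval t.succ).2 (by simp only [Fin.val_succ]; omega)]
          have e3 : jjL t = j' := (hjLval t).2 (by omega)
          rw [e1, e2, e3]
          exact ⟨hj'neg, by rw [hs]; exact hi'pos⟩
      obtain ⟨L', hL', ρ, jj2, hmono, h0ρ, hlρ, hinj2, hstep2⟩ :=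
        shortcut y (m - s.1 + 1) (by omega) cL jjL hstepL
      refine ⟨L', hL', cL ∘ ρ, jj2, ?_, ?_, hinj2, fun t => hstep2 t⟩
      · show cL (ρ 0) = cL (ρ (Fin.last L'))
        rw [h0ρ, hlρ]
        have eL : cL 0 = c s := by
          rw [(hcLval 0).1 (by simp only [Fin.val_zero]; omega) (by simp only [Fin.val_zero]; omega)]
          congr 1
          all_goals (apply Fin.ext; simp only [Fin.coe_castSucc, Fin.val_succ, Fin.val_last, Fin.val_zero]; all_goals omega)
        have eR : cL (Fin.last (m - s.1 + 1)) = c s :=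
          (hcLval (Fin.last (m - s.1 + 1))).2 (by simp [Fin.val_last])
        rw [eL, eR]
      · intro u v hu hv heq
        have hρu : (ρ u).1 < m - s.1 + 1 := by
          have : ρ u < ρ (Fin.last L') := hmono (by rw [Fin.lt_def]; simp [Fin.val_last]; omega)
          rw [hlρ] at this
          rw [Fin.lt_def] at this
          simpa using this
        have hρv : (ρ v).1 < m - s.1 + 1 := by
          have : ρ v < ρ (Fin.last L') := hmono (by rw [Fin.lt_def]; simp [Fin.val_last]; omega)
          rw [hlρ] at this
          rw [Fin.lt_def] at this
          simpa using this
        have hcu : cL (ρ u) = c ⟨s.1 + (ρ u).1, by omega⟩ :=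
          (hcLval (ρ u)).1 (by omega) (by omega)
        have hcv : cL (ρ v) = c ⟨s.1 + (ρ v).1, by omega⟩ :=
          (hcLval (ρ v)).1 (by omega) (by omega)
        have : cL (ρ u) = cL (ρ v) := heq
        rw [hcu, hcv] at this
        have h4 := hc this
        have h5 : (ρ u).1 = (ρ v).1 := by
          have := congrArg Fin.val h4
          simp at this
          omega
        exact hmono.injective (Fin.ext h5)
    · -- extend the path
      push_neg at hmem
      have hc' : Function.Injective (Fin.snoc c i' : Fin (m+2) → Fin k) := by
        intro u v huv
        rcases Fin.eq_castSucc_or_eq_last u with ⟨u0, rfl⟩ | rfl <;>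
          rcases Fin.eq_castSucc_or_eq_last v with ⟨v0, rfl⟩ | rfl
        · rw [Fin.snoc_castSucc, Fin.snoc_castSucc] at huv
          rw [hc huv]
        · rw [Fin.snoc_castSucc, Fin.snoc_last] at huv
          exact absurd huv (hmem u0)
        · rw [Fin.snoc_last, Fin.snoc_castSucc] at huv
          exact absurd huv.symm (hmem v0)
        · rfl
      have hcard : m + 2 ≤ k := by
        have := Fintype.card_le_of_injective _ hc'
        simp at this; omega
      have hstep' : ∀ t : Fin (m+1),
          Stp y ((Fin.snoc c i' : Fin (m+2) → Fin k) t.castSucc)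
            ((Fin.snoc c i' : Fin (m+2) → Fin k) t.succ)
            ((Fin.snoc jj j' : Fin (m+1) → Fin n) t) := by
        intro t
        rcases Fin.eq_castSucc_or_eq_last t with ⟨t0, rfl⟩ | rfl
        · have e1 : (Fin.snoc c i' : Fin (m+2) → Fin k) t0.castSucc.castSucc = c t0.castSucc :=
            Fin.snoc_castSucc _ _ _
          have e2 : (Fin.snoc c i' : Fin (m+2) → Fin k) t0.castSucc.succ = c t0.succ := by
            have he : (t0.castSucc.succ : Fin (m+2)) = (t0.succ : Fin (m+1)).castSucc := by
              apply Fin.ext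
              simp
            rw [he, Fin.snoc_castSucc]
          have e3 : (Fin.snoc jj j' : Fin (m+1) → Fin n) t0.castSucc = jj t0 :=
            Fin.snoc_castSucc _ _ _
          rw [e1, e2, e3]
          exact hstep t0
        · have e1 : (Fin.snoc c i' : Fin (m+2) → Fin k) (Fin.last m).castSucc =
              c (Fin.last m) := Fin.snoc_castSucc _ _ _
          have e2 : (Fin.snoc c i' : Fin (m+2) → Fin k) (Fin.last m).succ = i' := by
            have he : ((Fin.last m).succ : Fin (m+2)) = Fin.last (m+1) := by
              apply Fin.ext
              simp
            rw [he, Fin.snoc_last]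
          have e3 : (Fin.snoc jj j' : Fin (m+1) → Fin n) (Fin.last m) = j' :=
            Fin.snoc_last _ _
          rw [e1, e2, e3]
          exact ⟨hj'neg, hi'pos⟩
      have h0' : (Fin.snoc c i' : Fin (m+2) → Fin k) 0 = c 0 := by
        have he : (0 : Fin (m+2)) = ((0 : Fin (m+1)).castSucc) := by
          apply Fin.ext
          simp
        rw [he, Fin.snoc_castSucc]
      apply IH (fuel - 1) (by omega) (m+1) (Fin.snoc c i') (Fin.snoc jj j') (by omega) hc' hstep'
      · intro h
        exact absurd h (Nat.succ_ne_zero m)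
      · rcases hcase with hneg | hall
        · left
          rw [h0']
          exact hneg
        · right
          exact hall

lemma walk_main (hcol : ∀ j, ∑ i, y (i, j) = 0) (hy : y ≠ 0) :
    LoopGoal y ∨ SeqGoal y := by
  by_cases hall : ∀ i, ∑ j, y (i, j) = 0
  · have hex : ∃ p, y p ≠ 0 := by
      by_contra h
      push_neg at h
      exact hy (funext h)
    obtain ⟨⟨i0, j0⟩, hp⟩ := hex
    have hneg : ∃ i1, y (i1, j0) < 0 := by
      rcases lt_trichotomy (y (i0, j0)) 0 with h | h | h
      · exact ⟨i0, h⟩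
      · exact absurd h hp
      · exact exists_neg_of_pos y hcol h
    obtain ⟨i1, h1⟩ := hneg
    obtain ⟨i2, h2⟩ := exists_pos_of_neg y hcol h1
    have hcex : ∃ c : Fin 2 → Fin k, (∀ u : Fin 2, u.1 = 0 → c u = i1) ∧
        (∀ u : Fin 2, u.1 = 1 → c u = i2) := by
      refine ⟨fun u => if u.1 = 0 then i1 else i2, fun u hu => ?_, fun u hu => ?_⟩
      · dsimp only
        rw [if_pos hu]
      · dsimp only
        rw [if_neg (by omega)]
    obtain ⟨c, hcv0, hcv1⟩ := hcex
    have hi12 : i1 ≠ i2 := by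
      intro h
      rw [h] at h1
      linarith
    have hcinj : Function.Injective c := by
      intro u v huv
      have hu := u.2
      have hv := v.2
      apply Fin.ext
      rcases Nat.lt_or_ge u.1 1 with h | h <;> rcases Nat.lt_or_ge v.1 1 with h' | h'
      · omega
      · exfalso
        rw [hcv0 u (by omega), hcv1 v (by omega)] at huv
        exact hi12 huv
      · exfalso
        rw [hcv1 u (by omega), hcv0 v (by omega)] at huv
        exact hi12 huv.symm
      · omega
    have hstep1 : ∀ t : Fin 1, Stp y (c t.castSucc) (c t.succ) ((fun _ => j0) t) := by
      intro t
      have ht := t.2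
      have e1 : c t.castSucc = i1 := hcv0 _ (by simp only [Fin.coe_castSucc]; omega)
      have e2 : c t.succ = i2 := hcv1 _ (by simp only [Fin.val_succ]; omega)
      rw [e1, e2]
      exact ⟨h1, h2⟩
    exact ext_walk y hcol k 1 c (fun _ => j0) (by omega) hcinj hstep1
      (fun h => absurd h one_ne_zero) (Or.inr hall)
  · push_neg at hall
    obtain ⟨i0, hi0⟩ := exists_rowneg y hcol hall
    exact ext_walk y hcol k 0 (fun _ => i0) Fin.elim0 (by omega)
      (fun u v _ => Fin.ext (by have hu := u.2; have hv := v.2; omega)) (fun t => t.elim0) (fun _ => hi0) (Or.inl hi0)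

end Walk2

section Convert
variable {k n : ℕ} (y : Fin k × Fin n → ℝ)

lemma loop_to_cyc (hL : LoopGoal y) :
    ∃ (m : ℕ) (hm : 2 ≤ m) (c : Fin m → Fin k) (jj : Fin m → Fin n),
      Function.Injective c ∧ Function.Injective jj ∧
      ∀ t : Fin m, Stp y (c t) (c (nxt (by omega) t)) (jj t) := by
  obtain ⟨m, hm1, c, jj, hcl, hcinj, hjinj, hstep⟩ := hL
  have hm2 : 2 ≤ m := by
    by_contra h
    have hm1' : m = 1 := by omega
    subst hm1'
    have hs := hstep 0
    have e0 : ((0 : Fin 1).castSucc : Fin 2) = 0 := by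
      apply Fin.ext
      simp
    have e1 : ((0 : Fin 1).succ : Fin 2) = Fin.last 1 := by
      apply Fin.ext
      simp
    rw [e0, e1, ← hcl] at hs
    exact absurd hs.2 (not_lt.mpr hs.1.le)
  obtain ⟨C, hCval⟩ : ∃ C : Fin m → Fin k, ∀ t : Fin m, C t = c ⟨t.1, by omega⟩ :=
    ⟨fun t => c ⟨t.1, by omega⟩, fun t => rfl⟩
  refine ⟨m, hm2, C, jj, ?_, hjinj, ?_⟩
  · intro u v huv
    rw [hCval, hCval] at huv
    have h2 := hcinj ⟨u.1, by omega⟩ ⟨v.1, by omega⟩ u.2 v.2 huv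
    have h3 : u.1 = v.1 := by simpa [Fin.mk.injEq] using h2
    exact Fin.ext h3
  · intro t
    have ht := t.2
    have e1 : C t = c t.castSucc := by
      rw [hCval]
      exact congrArg c (Fin.ext rfl)
    rcases Nat.lt_or_ge (t.1 + 1) m with h | h
    · have e2 : C (nxt (by omega) t) = c t.succ := by
        rw [hCval]
        apply congrArg c
        apply Fin.ext
        simp only [nxt, Fin.val_succ]
        exact Nat.mod_eq_of_lt h
      rw [e1, e2]
      exact hstep t
    · have htm : t.1 + 1 = m := by omega
      have e2 : C (nxt (by omega) t) = c t.succ := by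
        rw [hCval]
        have hz : (⟨(nxt (by omega : 0 < m) t).1, by omega⟩ : Fin (m+1)) = 0 := by
          apply Fin.ext
          simp only [nxt, Fin.val_zero]
          rw [htm]
          exact Nat.mod_self m
        rw [hz, hcl]
        apply congrArg c
        apply Fin.ext
        simp only [Fin.val_last, Fin.val_succ]
        omega
      rw [e1, e2]
      exact hstep t

end Convert

section Tri
variable {k n : ℕ}

lemma seqVec_trichotomy {m : ℕ} {c : Fin (m+1) → Fin k} {jj : Fin m → Fin n}
    (hc : Function.Injective c) (hjj : Function.Injective jj) (p : Fin k × Fin n) :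
    seqVec m c jj p = 0 ∨
    (∃ t, p = (c t.succ, jj t) ∧ seqVec m c jj p = 1) ∨
    (∃ t, p = (c t.castSucc, jj t) ∧ seqVec m c jj p = -1) := by
  by_cases h1 : ∃ t : Fin m, p = ((c t.succ, jj t) : Fin k × Fin n)
  · obtain ⟨t, rfl⟩ := h1
    exact Or.inr (Or.inl ⟨t, rfl, seqVec_apply_pos hc hjj t⟩)
  · by_cases h2 : ∃ t : Fin m, p = ((c t.castSucc, jj t) : Fin k × Fin n)
    · obtain ⟨t, rfl⟩ := h2
      exact Or.inr (Or.inr ⟨t, rfl, seqVec_apply_neg hc hjj t⟩)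
    · push_neg at h1 h2
      exact Or.inl (seqVec_apply_zero p (fun t => ⟨h1 t, h2 t⟩))

lemma cycVec_trichotomy {m : ℕ} (hm : 2 ≤ m) {c : Fin m → Fin k} {jj : Fin m → Fin n}
    (hc : Function.Injective c) (hjj : Function.Injective jj) (p : Fin k × Fin n) :
    cycVec m hm c jj p = 0 ∨
    (∃ t, p = (c (nxt (by omega) t), jj t) ∧ cycVec m hm c jj p = 1) ∨
    (∃ t, p = (c t, jj t) ∧ cycVec m hm c jj p = -1) := by
  by_cases h1 : ∃ t : Fin m, p = ((c (nxt (by omega : 0 < m) t), jj t) : Fin k × Fin n)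
  · obtain ⟨t, rfl⟩ := h1
    exact Or.inr (Or.inl ⟨t, rfl, cycVec_apply_pos hm hc hjj t⟩)
  · by_cases h2 : ∃ t : Fin m, p = ((c t, jj t) : Fin k × Fin n)
    · obtain ⟨t, rfl⟩ := h2
      exact Or.inr (Or.inr ⟨t, rfl, cycVec_apply_neg hm hc hjj t⟩)
    · push_neg at h1 h2
      exact Or.inl (cycVec_apply_zero hm p (fun t => ⟨h1 t, h2 t⟩))

lemma ineq_smul (b : ℝ) (z : Fin k × Fin n → ℝ) (r : Fin k ⊕ Fin k ⊕ Fin k × Fin n) :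
    PPpmIneq (b • z) r = b * PPpmIneq z r := by
  rcases r with i | r
  · show -(∑ j, (b • z) (i, j)) = b * -(∑ j, z (i, j))
    simp only [Pi.smul_apply, smul_eq_mul]
    rw [← Finset.mul_sum]
    ring
  · rcases r with i | p
    · show (∑ j, (b • z) (i, j)) = b * (∑ j, z (i, j))
      simp only [Pi.smul_apply, smul_eq_mul]
      rw [← Finset.mul_sum]
    · show -((b • z) p) = b * -(z p)
      simp only [Pi.smul_apply, smul_eq_mul]
      ring

lemma ineq_inl (z : Fin k × Fin n → ℝ) (i : Fin k) :
    PPpmIneq z (Sum.inl i) = -(∑ j, z (i, j)) := rfl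

lemma ineq_inrinr (z : Fin k × Fin n → ℝ) (p : Fin k × Fin n) :
    PPpmIneq z (Sum.inr (Sum.inr p)) = -(z p) := rfl

end Tri

section Backward
variable {k n : ℕ}

lemma circuit_of_seq {g : Fin k × Fin n → ℝ} (h : IsSequentialMovement g) :
    IsCircuitPPpm g := by
  classical
  obtain ⟨m, hm, c, jj, hc, hjj, hgsum⟩ := h
  have hg : g = seqVec m c jj := hgsum
  have hcol : ∀ j, ∑ i, g (i, j) = 0 := by
    intro j
    rw [hg]
    exact seqVec_colsum c jj j
  refine ⟨hcol, ?_, ?_, ?_⟩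
  · intro h0
    have h1 := seqVec_apply_pos hc hjj ⟨0, hm⟩
    rw [← hg, h0] at h1
    simp at h1
  · refine ⟨fun p => if 0 < g p then 1 else if g p < 0 then -1 else 0, ?_, ?_⟩
    · intro p
      rcases seqVec_trichotomy hc hjj p with h0 | ⟨t, _, h1⟩ | ⟨t, _, h1⟩
      · rw [← hg] at h0
        norm_num [h0]
      · rw [← hg] at h1
        norm_num [h1]
      · rw [← hg] at h1
        norm_num [h1]
    · apply Int.eq_one_of_dvd_one (Int.nonneg_of_normalize_eq_self Finset.normalize_gcd)
      have h1 : g (c (⟨0, hm⟩ : Fin m).succ, jj ⟨0, hm⟩) = 1 := by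
        rw [hg]
        exact seqVec_apply_pos hc hjj ⟨0, hm⟩
      have hd := Finset.gcd_dvd
        (f := fun p => if 0 < g p then (1:ℤ) else if g p < 0 then -1 else 0)
        (Finset.mem_univ (c (⟨0, hm⟩ : Fin m).succ, jj ⟨0, hm⟩))
      simp only [h1] at hd
      norm_num at hd
      exact hd
  · rintro ⟨y, hycol, hyne, hss⟩
    obtain ⟨hsub, hne⟩ := Set.ssubset_iff_subset_ne.mp hss
    have hsupp : ∀ p, seqVec m c jj p = 0 → y p = 0 := by
      intro p hzp
      by_contra hyp
      have hmem : (Sum.inr (Sum.inr p) : Fin k ⊕ Fin k ⊕ Fin k × Fin n) ∈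
          {r | PPpmIneq y r ≠ 0} := by
        show -(y p) ≠ 0
        simpa using hyp
      have h2 : -(g p) ≠ 0 := hsub hmem
      rw [hg, hzp] at h2
      simp at h2
    have hrow : ∀ t : Fin (m+1), t ≠ 0 → t ≠ Fin.last m → ∑ j, y (c t, j) = 0 := by
      intro t ht0' htl
      by_contra hy0
      have hmem : (Sum.inl (c t) : Fin k ⊕ Fin k ⊕ Fin k × Fin n) ∈
          {r | PPpmIneq y r ≠ 0} := by
        show -(∑ j, y (c t, j)) ≠ 0
        simpa using hy0
      have h2 : -(∑ j, g (c t, j)) ≠ 0 := hsub hmem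
      apply h2
      have h3 : ∀ j, g (c t, j) = seqVec m c jj (c t, j) := fun j => by rw [hg]
      rw [Finset.sum_congr rfl fun j _ => h3 j, seqVec_rowsum,
        if_neg (fun hh => htl (hc hh)), if_neg (fun hh => ht0' (hc hh))]
      norm_num
    have hb := rigid_seq hm hc hjj y hycol hsupp hrow
    have hbne : y (c (⟨0, hm⟩ : Fin m).succ, jj ⟨0, hm⟩) ≠ 0 := by
      intro h0
      apply hyne
      rw [hb, h0, zero_smul]
    apply hne
    apply Set.Subset.antisymm hsub
    intro r hr
    show PPpmIneq y r ≠ 0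
    rw [hb, ineq_smul]
    refine mul_ne_zero hbne ?_
    rw [← hg]
    exact hr

lemma circuit_of_cyc {g : Fin k × Fin n → ℝ} (h : IsCyclicalExchange g) :
    IsCircuitPPpm g := by
  classical
  obtain ⟨m, hm, c, jj, hc, hjj, hgsum⟩ := h
  have hg : g = cycVec m hm c jj := hgsum
  have hm0 : (0:ℕ) < m := by omega
  have hcol : ∀ j, ∑ i, g (i, j) = 0 := by
    intro j
    rw [hg]
    exact cycVec_colsum hm c jj j
  refine ⟨hcol, ?_, ?_, ?_⟩
  · intro h0
    have h1 := cycVec_apply_pos hm hc hjj ⟨0, hm0⟩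
    rw [← hg, h0] at h1
    simp at h1
  · refine ⟨fun p => if 0 < g p then 1 else if g p < 0 then -1 else 0, ?_, ?_⟩
    · intro p
      rcases cycVec_trichotomy hm hc hjj p with h0 | ⟨t, _, h1⟩ | ⟨t, _, h1⟩
      · rw [← hg] at h0
        norm_num [h0]
      · rw [← hg] at h1
        norm_num [h1]
      · rw [← hg] at h1
        norm_num [h1]
    · apply Int.eq_one_of_dvd_one (Int.nonneg_of_normalize_eq_self Finset.normalize_gcd)
      have h1 : g (c (nxt hm0 ⟨0, hm0⟩), jj ⟨0, hm0⟩) = 1 := by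
        rw [hg]
        exact cycVec_apply_pos hm hc hjj ⟨0, hm0⟩
      have hd := Finset.gcd_dvd
        (f := fun p => if 0 < g p then (1:ℤ) else if g p < 0 then -1 else 0)
        (Finset.mem_univ (c (nxt hm0 ⟨0, hm0⟩), jj ⟨0, hm0⟩))
      simp only [h1] at hd
      norm_num at hd
      exact hd
  · rintro ⟨y, hycol, hyne, hss⟩
    obtain ⟨hsub, hne⟩ := Set.ssubset_iff_subset_ne.mp hss
    have hsupp : ∀ p, cycVec m hm c jj p = 0 → y p = 0 := by
      intro p hzp
      by_contra hyp
      have hmem : (Sum.inr (Sum.inr p) : Fin k ⊕ Fin k ⊕ Fin k × Fin n) ∈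
          {r | PPpmIneq y r ≠ 0} := by
        show -(y p) ≠ 0
        simpa using hyp
      have h2 : -(g p) ≠ 0 := hsub hmem
      rw [hg, hzp] at h2
      simp at h2
    have hrow : ∀ i, ∑ j, y (i, j) = 0 := by
      intro i
      by_contra hy0
      have hmem : (Sum.inl i : Fin k ⊕ Fin k ⊕ Fin k × Fin n) ∈
          {r | PPpmIneq y r ≠ 0} := by
        show -(∑ j, y (i, j)) ≠ 0
        simpa using hy0
      have h2 : -(∑ j, g (i, j)) ≠ 0 := hsub hmem
      apply h2
      have h3 : ∀ j, g (i, j) = cycVec m hm c jj (i, j) := fun j => by rw [hg]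
      rw [Finset.sum_congr rfl fun j _ => h3 j, cycVec_rowsum]
      norm_num
    have hb := rigid_cyc hm hc hjj y hycol hsupp hrow
    have hbne : y (c (nxt (by omega) ⟨0, by omega⟩), jj ⟨0, by omega⟩) ≠ 0 := by
      intro h0
      apply hyne
      rw [hb, h0, zero_smul]
    apply hne
    apply Set.Subset.antisymm hsub
    intro r hr
    show PPpmIneq y r ≠ 0
    rw [hb, ineq_smul]
    refine mul_ne_zero hbne ?_
    rw [← hg]
    exact hr

end Backward

section Forward
variable {k n : ℕ}

lemma circuit_forward {g : Fin k × Fin n → ℝ} (hcirc : IsCircuitPPpm g) :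
    IsCyclicalExchange g ∨ IsSequentialMovement g := by
  obtain ⟨hcol, hg0, ⟨gz, hgz, hgcd⟩, hmin⟩ := hcirc
  rcases walk_main g hcol hg0 with hLoop | hSeq
  · -- cyclical exchange
    left
    obtain ⟨m, hm2, c, jj, hcinj, hjinj, hstep⟩ := loop_to_cyc g hLoop
    have hm0 : (0:ℕ) < m := by omega
    have hzcol : ∀ j, ∑ i, cycVec m hm2 c jj (i, j) = 0 := cycVec_colsum hm2 c jj
    have hznz : cycVec m hm2 c jj ≠ 0 := by
      intro h0
      have h1 := cycVec_apply_pos hm2 hcinj hjinj ⟨0, hm0⟩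
      rw [h0] at h1
      simp at h1
    have hsubset : {r | PPpmIneq (cycVec m hm2 c jj) r ≠ 0} ⊆ {r | PPpmIneq g r ≠ 0} := by
      intro r hr
      rcases r with i | r
      · exfalso
        apply hr
        show -(∑ j, cycVec m hm2 c jj (i, j)) = 0
        rw [cycVec_rowsum]
        exact neg_zero
      · rcases r with i | p
        · exfalso
          exact hr (cycVec_rowsum hm2 c jj i)
        · have hzp : cycVec m hm2 c jj p ≠ 0 := by
            intro h0
            apply hr
            show -(cycVec m hm2 c jj p) = 0
            rw [h0]
            exact neg_zero
          show -(g p) ≠ 0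
          rcases cycVec_trichotomy hm2 hcinj hjinj p with h0 | ⟨t, hpt, _⟩ | ⟨t, hpt, _⟩
          · exact absurd h0 hzp
          · subst hpt
            simp only [neg_ne_zero]
            exact (hstep t).2.ne'
          · subst hpt
            simp only [neg_ne_zero]
            exact (hstep t).1.ne
    have heq : {r | PPpmIneq (cycVec m hm2 c jj) r ≠ 0} = {r | PPpmIneq g r ≠ 0} := by
      by_contra hne
      exact hmin ⟨cycVec m hm2 c jj, hzcol, hznz, Set.ssubset_iff_subset_ne.mpr ⟨hsubset, hne⟩⟩
    have hsupp : ∀ p, cycVec m hm2 c jj p = 0 → g p = 0 := by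
      intro p hzp
      by_contra hgp
      have hmem : (Sum.inr (Sum.inr p) : Fin k ⊕ Fin k ⊕ Fin k × Fin n) ∈
          {r | PPpmIneq g r ≠ 0} := by
        show -(g p) ≠ 0
        simpa using hgp
      rw [← heq] at hmem
      have h2 : -(cycVec m hm2 c jj p) ≠ 0 := hmem
      rw [hzp] at h2
      simp at h2
    have hrow : ∀ i, ∑ j, g (i, j) = 0 := by
      intro i
      by_contra hgi
      have hmem : (Sum.inl i : Fin k ⊕ Fin k ⊕ Fin k × Fin n) ∈ {r | PPpmIneq g r ≠ 0} := by
        show -(∑ j, g (i, j)) ≠ 0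
        simpa using hgi
      rw [← heq] at hmem
      apply hmem
      show -(∑ j, cycVec m hm2 c jj (i, j)) = 0
      rw [cycVec_rowsum]
      exact neg_zero
    have hb : g = g (c (nxt hm0 ⟨0, hm0⟩), jj ⟨0, hm0⟩) • cycVec m hm2 c jj :=
      rigid_cyc hm2 hcinj hjinj g hcol hsupp hrow
    have hbpos : 0 < g (c (nxt hm0 ⟨0, hm0⟩), jj ⟨0, hm0⟩) := (hstep ⟨0, hm0⟩).2
    have hbz : ((gz (c (nxt hm0 ⟨0, hm0⟩), jj ⟨0, hm0⟩) : ℤ) : ℝ) =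
        g (c (nxt hm0 ⟨0, hm0⟩), jj ⟨0, hm0⟩) := (hgz _).symm
    have hdvd : ∀ p ∈ Finset.univ, gz (c (nxt hm0 ⟨0, hm0⟩), jj ⟨0, hm0⟩) ∣ gz p := by
      intro p _
      rcases cycVec_trichotomy hm2 hcinj hjinj p with h0 | ⟨t, hpt, h1⟩ | ⟨t, hpt, h1⟩
      · have hgp : g p = 0 := hsupp p h0
        have h2 : (gz p : ℝ) = 0 := by rw [← hgz p]; exact hgp
        have h3 : gz p = 0 := by exact_mod_cast h2
        rw [h3]
        exact dvd_zero _
      · have hgp : g p = g (c (nxt hm0 ⟨0, hm0⟩), jj ⟨0, hm0⟩) := by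
          conv_lhs => rw [hb]
          rw [Pi.smul_apply, h1, smul_eq_mul, mul_one]
        have h2 : (gz p : ℝ) = ((gz (c (nxt hm0 ⟨0, hm0⟩), jj ⟨0, hm0⟩) : ℤ) : ℝ) := by
          rw [← hgz p, hbz]
          exact hgp
        have h3 : gz p = gz (c (nxt hm0 ⟨0, hm0⟩), jj ⟨0, hm0⟩) := by exact_mod_cast h2
        rw [h3]
      · have hgp : g p = -(g (c (nxt hm0 ⟨0, hm0⟩), jj ⟨0, hm0⟩)) := by
          conv_lhs => rw [hb]
          rw [Pi.smul_apply, h1, smul_eq_mul, mul_neg_one]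
        have h2 : (gz p : ℝ) = -((gz (c (nxt hm0 ⟨0, hm0⟩), jj ⟨0, hm0⟩) : ℤ) : ℝ) := by
          rw [← hgz p, hbz]
          exact hgp
        have h3 : gz p = -(gz (c (nxt hm0 ⟨0, hm0⟩), jj ⟨0, hm0⟩)) := by exact_mod_cast h2
        rw [h3]
        exact dvd_neg.mpr dvd_rfl
    have hdvd1 : gz (c (nxt hm0 ⟨0, hm0⟩), jj ⟨0, hm0⟩) ∣ 1 := hgcd ▸ Finset.dvd_gcd hdvd
    rcases Int.isUnit_iff.1 (isUnit_of_dvd_one hdvd1) with h1 | h1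
    · have hbR1 : g (c (nxt hm0 ⟨0, hm0⟩), jj ⟨0, hm0⟩) = 1 := by
        rw [← hbz, h1]
        norm_num
      refine ⟨m, hm2, c, jj, hcinj, hjinj, ?_⟩
      show g = cycVec m hm2 c jj
      rw [hb, hbR1, one_smul]
    · exfalso
      rw [← hbz, h1] at hbpos
      norm_num at hbpos
  · -- sequential movement
    right
    obtain ⟨m, hm, c, jj, hcinj, hjinj, hstep, h0ne, hlne⟩ := hSeq
    have h0l : (0 : Fin (m+1)) ≠ Fin.last m := by
      intro h
      have := congrArg Fin.val h
      simp only [Fin.val_zero, Fin.val_last] at this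
      omega
    have hzcol : ∀ j, ∑ i, seqVec m c jj (i, j) = 0 := seqVec_colsum c jj
    have hznz : seqVec m c jj ≠ 0 := by
      intro h0
      have h1 := seqVec_apply_pos hcinj hjinj ⟨0, hm⟩
      rw [h0] at h1
      simp at h1
    have hsubset : {r | PPpmIneq (seqVec m c jj) r ≠ 0} ⊆ {r | PPpmIneq g r ≠ 0} := by
      intro r hr
      rcases r with i | r
      · have hne0 : ∑ j, seqVec m c jj (i, j) ≠ 0 := by
          intro h
          apply hr
          show -(∑ j, seqVec m c jj (i, j)) = 0
          rw [h]
          exact neg_zero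
        rw [seqVec_rowsum] at hne0
        by_cases h1 : i = c (Fin.last m)
        · show -(∑ j, g (i, j)) ≠ 0
          rw [h1]
          simpa using hlne
        · by_cases h2 : i = c 0
          · show -(∑ j, g (i, j)) ≠ 0
            rw [h2]
            simpa using h0ne
          · exfalso
            rw [if_neg h1, if_neg h2] at hne0
            norm_num at hne0
      · rcases r with i | p
        · have hne0 : ∑ j, seqVec m c jj (i, j) ≠ 0 := hr
          rw [seqVec_rowsum] at hne0
          by_cases h1 : i = c (Fin.last m)
          · show (∑ j, g (i, j)) ≠ 0
            rw [h1]
            exact hlne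
          · by_cases h2 : i = c 0
            · show (∑ j, g (i, j)) ≠ 0
              rw [h2]
              exact h0ne
            · exfalso
              rw [if_neg h1, if_neg h2] at hne0
              norm_num at hne0
        · have hzp : seqVec m c jj p ≠ 0 := by
            intro h0
            apply hr
            show -(seqVec m c jj p) = 0
            rw [h0]
            exact neg_zero
          show -(g p) ≠ 0
          rcases seqVec_trichotomy hcinj hjinj p with h0 | ⟨t, hpt, _⟩ | ⟨t, hpt, _⟩
          · exact absurd h0 hzp
          · subst hpt
            simp only [neg_ne_zero]
            exact (hstep t).2.ne'
          · subst hpt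
            simp only [neg_ne_zero]
            exact (hstep t).1.ne
    have heq : {r | PPpmIneq (seqVec m c jj) r ≠ 0} = {r | PPpmIneq g r ≠ 0} := by
      by_contra hne
      exact hmin ⟨seqVec m c jj, hzcol, hznz, Set.ssubset_iff_subset_ne.mpr ⟨hsubset, hne⟩⟩
    have hsupp : ∀ p, seqVec m c jj p = 0 → g p = 0 := by
      intro p hzp
      by_contra hgp
      have hmem : (Sum.inr (Sum.inr p) : Fin k ⊕ Fin k ⊕ Fin k × Fin n) ∈
          {r | PPpmIneq g r ≠ 0} := by
        show -(g p) ≠ 0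
        simpa using hgp
      rw [← heq] at hmem
      have h2 : -(seqVec m c jj p) ≠ 0 := hmem
      rw [hzp] at h2
      simp at h2
    have hrowint : ∀ t : Fin (m+1), t ≠ 0 → t ≠ Fin.last m → ∑ j, g (c t, j) = 0 := by
      intro t ht0 htl
      by_contra hgi
      have hmem : (Sum.inl (c t) : Fin k ⊕ Fin k ⊕ Fin k × Fin n) ∈
          {r | PPpmIneq g r ≠ 0} := by
        show -(∑ j, g (c t, j)) ≠ 0
        simpa using hgi
      rw [← heq] at hmem
      apply hmem
      show -(∑ j, seqVec m c jj (c t, j)) = 0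
      rw [seqVec_rowsum, if_neg (fun hh => htl (hcinj hh)), if_neg (fun hh => ht0 (hcinj hh))]
      norm_num
    have hb : g = g (c (⟨0, hm⟩ : Fin m).succ, jj ⟨0, hm⟩) • seqVec m c jj :=
      rigid_seq hm hcinj hjinj g hcol hsupp hrowint
    have hbpos : 0 < g (c (⟨0, hm⟩ : Fin m).succ, jj ⟨0, hm⟩) := (hstep ⟨0, hm⟩).2
    have hbz : ((gz (c (⟨0, hm⟩ : Fin m).succ, jj ⟨0, hm⟩) : ℤ) : ℝ) =
        g (c (⟨0, hm⟩ : Fin m).succ, jj ⟨0, hm⟩) := (hgz _).symm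
    have hdvd : ∀ p ∈ Finset.univ, gz (c (⟨0, hm⟩ : Fin m).succ, jj ⟨0, hm⟩) ∣ gz p := by
      intro p _
      rcases seqVec_trichotomy hcinj hjinj p with h0 | ⟨t, hpt, h1⟩ | ⟨t, hpt, h1⟩
      · have hgp : g p = 0 := hsupp p h0
        have h2 : (gz p : ℝ) = 0 := by rw [← hgz p]; exact hgp
        have h3 : gz p = 0 := by exact_mod_cast h2
        rw [h3]
        exact dvd_zero _
      · have hgp : g p = g (c (⟨0, hm⟩ : Fin m).succ, jj ⟨0, hm⟩) := by
          conv_lhs => rw [hb]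
          rw [Pi.smul_apply, h1, smul_eq_mul, mul_one]
        have h2 : (gz p : ℝ) = ((gz (c (⟨0, hm⟩ : Fin m).succ, jj ⟨0, hm⟩) : ℤ) : ℝ) := by
          rw [← hgz p, hbz]
          exact hgp
        have h3 : gz p = gz (c (⟨0, hm⟩ : Fin m).succ, jj ⟨0, hm⟩) := by exact_mod_cast h2
        rw [h3]
      · have hgp : g p = -(g (c (⟨0, hm⟩ : Fin m).succ, jj ⟨0, hm⟩)) := by
          conv_lhs => rw [hb]
          rw [Pi.smul_apply, h1, smul_eq_mul, mul_neg_one]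
        have h2 : (gz p : ℝ) = -((gz (c (⟨0, hm⟩ : Fin m).succ, jj ⟨0, hm⟩) : ℤ) : ℝ) := by
          rw [← hgz p, hbz]
          exact hgp
        have h3 : gz p = -(gz (c (⟨0, hm⟩ : Fin m).succ, jj ⟨0, hm⟩)) := by exact_mod_cast h2
        rw [h3]
        exact dvd_neg.mpr dvd_rfl
    have hdvd1 : gz (c (⟨0, hm⟩ : Fin m).succ, jj ⟨0, hm⟩) ∣ 1 := hgcd ▸ Finset.dvd_gcd hdvd
    rcases Int.isUnit_iff.1 (isUnit_of_dvd_one hdvd1) with h1 | h1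
    · have hbR1 : g (c (⟨0, hm⟩ : Fin m).succ, jj ⟨0, hm⟩) = 1 := by
        rw [← hbz, h1]
        norm_num
      refine ⟨m, hm, c, jj, hcinj, hjinj, ?_⟩
      show g = seqVec m c jj
      rw [hb, hbR1, one_smul]
    · exfalso
      rw [← hbz, h1] at hbpos
      norm_num at hbpos

end Forward

theorem bounded_size_partition_polytope_circuits
    {k n : ℕ} (hk : 0 < k) (hn : 0 < n) (κm κp : Fin k → ℕ) (hκ : ∀ i, κm i ≤ κp i)
    (g : Fin k × Fin n → ℝ) :
    IsCircuitPPpm g ↔ (IsCyclicalExchange g ∨ IsSequentialMovement g) :=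
  ⟨circuit_forward, fun h => h.elim circuit_of_cyc circuit_of_seq⟩
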